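/- For every integer n ≥ 2, the product of sin(πk/n) over all integers k with 1 ≤ k ≤ n−1 and gcd(k,n) = 1 equals exp(Λ(n)) / 2^(φ(n)), where Λ is the von Mangoldt function and φ is Euler's totient function. -/

import Mathlib

open Real Finset

lemma abs_one_sub_exp' (θ : ℝ) :
    ‖1 - Complex.exp (θ * Complex.I)‖ = 2 * |Real.sin (θ / 2)| := by
  rw [Complex.norm_def, Complex.normSq_apply, Complex.exp_mul_I]
  simp only [Complex.sub_re, Complex.sub_im, Complex.one_re, Complex.one_im, Complex.add_re,
    Complex.add_im, Complex.mul_re, Complex.mul_im, Complex.I_re, Complex.I_im,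
    Complex.cos_ofReal_re, Complex.cos_ofReal_im, Complex.sin_ofReal_re, Complex.sin_ofReal_im]
  have hc : Real.cos θ = 1 - 2 * Real.sin (θ / 2) ^ 2 := by
    have h1 : Real.cos (2 * (θ / 2)) = 2 * Real.cos (θ / 2) ^ 2 - 1 := Real.cos_two_mul _
    have h2 := Real.sin_sq_add_cos_sq (θ / 2)
    have h3 : (2 : ℝ) * (θ / 2) = θ := by ring
    rw [h3] at h1; nlinarith
  have h : (1 - (Real.cos θ + (Real.sin θ * 0 - 0 * 1))) *
        (1 - (Real.cos θ + (Real.sin θ * 0 - 0 * 1))) +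
        (0 - (0 + (Real.sin θ * 1 + 0 * 0))) * (0 - (0 + (Real.sin θ * 1 + 0 * 0))) =
        (2 * Real.sin (θ / 2)) ^ 2 := by
    have := Real.sin_sq_add_cos_sq θ
    nlinarith
  rw [h, Real.sqrt_sq_eq_abs, abs_mul]
  norm_num

theorem sin_prod_coprime (n : ℕ) (hn : 2 ≤ n) :
    ∏ k ∈ (Finset.Icc 1 (n - 1)).filter (fun k => Nat.gcd k n = 1),
        Real.sin (π * k / n) =
      Real.exp (ArithmeticFunction.vonMangoldt n) / 2 ^ n.totient := by
  have hn0 : 0 < n := by omega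
  haveI : NeZero n := ⟨hn0.ne'⟩
  set S := (Finset.Icc 1 (n - 1)).filter (fun k => Nat.gcd k n = 1) with hS
  -- card of S
  have hScard : S.card = n.totient := by
    have : S = (Finset.range n).filter n.Coprime := by
      ext k
      simp only [hS, mem_filter, mem_Icc, mem_range]
      constructor
      · rintro ⟨⟨h1, h2⟩, h3⟩
        exact ⟨by omega, (Nat.coprime_comm.mp h3)⟩
      · rintro ⟨hk, hc⟩
        have hk0 : k ≠ 0 := by
          rintro rfl
          simp [Nat.Coprime] at hc
          omega
        exact ⟨⟨by omega, by omega⟩, Nat.coprime_comm.mp hc⟩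
    rw [this, Nat.totient]
  -- the primitive root
  set ζ : ℂ := Complex.exp (2 * ↑π * Complex.I / ↑n) with hζdef
  have hζ : IsPrimitiveRoot ζ n := Complex.isPrimitiveRoot_exp n hn0.ne'
  -- the cyclotomic value
  have hE : Polynomial.eval (1 : ℝ) (Polynomial.cyclotomic n ℝ) =
      Real.exp (ArithmeticFunction.vonMangoldt n) := by
    rw [ArithmeticFunction.vonMangoldt_apply]
    by_cases h : IsPrimePow n
    · rw [if_pos h]
      obtain ⟨p, k, hp, hk, rfl⟩ := h
      haveI : Fact p.Prime := ⟨hp.nat_prime⟩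
      rw [Nat.Prime.pow_minFac hp.nat_prime hk.ne']
      obtain ⟨k, rfl⟩ := Nat.exists_eq_succ_of_ne_zero hk.ne'
      rw [Polynomial.eval_one_cyclotomic_prime_pow,
        Real.exp_log (by exact_mod_cast hp.nat_prime.pos)]
    · rw [if_neg h, Real.exp_zero]
      apply Polynomial.eval_one_cyclotomic_not_prime_pow
      intro p hp k hpk
      exact h ⟨p, k, hp.prime, by
        rcases Nat.eq_zero_or_pos k with rfl | hk0
        · simp at hpk; omega
        · exact hk0, hpk⟩
  -- product of (1 - ζ^k) over S equals cyclotomic at 1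
  have hprodC : ∏ k ∈ S, ((1 : ℂ) - ζ ^ k) =
      Polynomial.eval (1 : ℂ) (Polynomial.cyclotomic n ℂ) := by
    rw [Polynomial.cyclotomic_eq_prod_X_sub_primitiveRoots hζ, Polynomial.eval_prod]
    simp only [Polynomial.eval_sub, Polynomial.eval_X, Polynomial.eval_C]
    apply Finset.prod_bij (fun k _ => ζ ^ k)
    · intro k hk
      simp only [hS, mem_filter, mem_Icc] at hk
      exact (mem_primitiveRoots hn0).mpr (hζ.pow_of_coprime k hk.2)
    · intro i hi j hj hij
      simp only [hS, mem_filter, mem_Icc] at hi hj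
      exact hζ.pow_inj (by omega) (by omega) hij
    · intro ξ hξ
      have hξ' := (mem_primitiveRoots hn0).mp hξ
      obtain ⟨i, hin, hic, rfl⟩ := (hζ.isPrimitiveRoot_iff).mp hξ'
      have hi0 : i ≠ 0 := by
        rintro rfl
        rw [Nat.coprime_zero_left] at hic
        omega
      exact ⟨i, by simp only [hS, mem_filter, mem_Icc]; exact ⟨⟨by omega, by omega⟩, hic⟩, rfl⟩
    · intro k hk; rfl
  -- cyclotomic value over ℂ vs ℝ
  have hCR : Polynomial.eval (1 : ℂ) (Polynomial.cyclotomic n ℂ) =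
      ((Polynomial.eval (1 : ℝ) (Polynomial.cyclotomic n ℝ) : ℝ) : ℂ) := by
    have := Polynomial.cyclotomic.eval_apply (1 : ℝ) n (algebraMap ℝ ℂ)
    simpa using this
  -- each factor
  have hfac : ∀ k ∈ S, ‖1 - ζ ^ k‖ = 2 * Real.sin (π * k / n) := by
    intro k hk
    simp only [hS, mem_filter, mem_Icc] at hk
    have hζk : ζ ^ k = Complex.exp (((2 * π * k / n : ℝ) : ℂ) * Complex.I) := by
      rw [hζdef, ← Complex.exp_nat_mul]
      congr 1
      push_cast
      ring
    rw [hζk, abs_one_sub_exp']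
    have hθ : (2 * π * k / n : ℝ) / 2 = π * k / n := by ring
    rw [hθ]
    congr 1
    apply abs_of_pos
    apply Real.sin_pos_of_pos_of_lt_pi
    · have hk0 : (0 : ℝ) < k := by exact_mod_cast hk.1.1
      have hn0' : (0 : ℝ) < n := by exact_mod_cast hn0
      positivity
    · have hkn : (k : ℝ) < n := by
        have : k < n := by omega
        exact_mod_cast this
      have hn0' : (0 : ℝ) < n := by exact_mod_cast hn0
      rw [div_lt_iff₀ hn0']
      nlinarith [Real.pi_pos]
  -- assemble
  have habs : ∏ k ∈ S, (2 * Real.sin (π * k / n)) =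
      Polynomial.eval (1 : ℝ) (Polynomial.cyclotomic n ℝ) := by
    calc ∏ k ∈ S, (2 * Real.sin (π * k / n))
        = ∏ k ∈ S, ‖1 - ζ ^ k‖ := by
          exact Finset.prod_congr rfl fun k hk => (hfac k hk).symm
      _ = ‖∏ k ∈ S, ((1 : ℂ) - ζ ^ k)‖ := (norm_prod _ _).symm
      _ = ‖((Polynomial.eval (1 : ℝ) (Polynomial.cyclotomic n ℝ) : ℝ) : ℂ)‖ := by
          rw [hprodC, hCR]
      _ = |Polynomial.eval (1 : ℝ) (Polynomial.cyclotomic n ℝ)| := Complex.norm_real _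
      _ = Polynomial.eval (1 : ℝ) (Polynomial.cyclotomic n ℝ) := by
          rw [abs_of_nonneg]
          rw [hE]; positivity
  rw [Finset.prod_mul_distrib, Finset.prod_const, hScard, hE] at habs
  rw [← habs]
  field_simp
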